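/- Let C ⊆ V be independent in G and x ∈ C. The inequality p_x ≥ 0 defines a facet of M(G,C) if and only if x is an isolated vertex of G. -/

import Mathlib

open scoped Classical

/-- The polytope of `C`-modes of a graph `G`, inside the probability simplex. -/
def modePolytope {V : Type*} [Fintype V] (G : SimpleGraph V) (C : Set V) :
    Set (V → ℝ) :=
  {p | (∀ v, 0 ≤ p v) ∧ (∑ v, p v = 1) ∧ ∀ x ∈ C, ∀ y, G.Adj x y → p y ≤ p x}

/-- The affine dimension of a subset of `V → ℝ`, with `dim ∅ = -1`. -/
noncomputable def affDim {V : Type*} (s : Set (V → ℝ)) : ℤ :=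
  if s = ∅ then -1 else (Module.finrank ℝ (affineSpan ℝ s).direction : ℤ)

/-- The linear map sending `d` to `∑ v, d v`. -/
noncomputable def sumLM (V : Type*) [Fintype V] : (V → ℝ) →ₗ[ℝ] ℝ where
  toFun d := ∑ v, d v
  map_add' a b := Finset.sum_add_distrib
  map_smul' c a := by simp [Finset.mul_sum]

/-- The linear map `d ↦ (d x, ∑ v, d v)`. -/
noncomputable def evalSum {V : Type*} [Fintype V] (x : V) : (V → ℝ) →ₗ[ℝ] ℝ × ℝ :=
  (LinearMap.proj x).prod (sumLM V)

/-- The linear map `d ↦ (d x, d y, ∑ v, d v)`. -/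
noncomputable def evalSum2 {V : Type*} [Fintype V] (x y : V) :
    (V → ℝ) →ₗ[ℝ] ℝ × ℝ × ℝ :=
  (LinearMap.proj x).prod ((LinearMap.proj y).prod (sumLM V))

lemma finrank_ker_evalSum {V : Type*} [Fintype V] (x z : V) (hz : z ≠ x) :
    Module.finrank ℝ (LinearMap.ker (evalSum (V := V) x)) = Fintype.card V - 2 := by
  have hsurj : Function.Surjective (evalSum (V := V) x) := by
    rintro ⟨a, c⟩
    refine ⟨Pi.single x a + Pi.single z (c - a), ?_⟩
    simp [evalSum, sumLM, Pi.single_eq_of_ne (Ne.symm hz), Finset.sum_add_distrib,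
      Finset.sum_pi_single', LinearMap.prod_apply]
  have h := LinearMap.finrank_range_add_finrank_ker (evalSum (V := V) x)
  rw [LinearMap.range_eq_top.mpr hsurj, finrank_top,
    Module.finrank_fintype_fun_eq_card] at h
  have h2 : Module.finrank ℝ (ℝ × ℝ) = 2 := by simp [Module.finrank_prod]
  omega

lemma finrank_ker_evalSum2 {V : Type*} [Fintype V] (x y z : V)
    (hxy : x ≠ y) (hzx : z ≠ x) (hzy : z ≠ y) :
    Module.finrank ℝ (LinearMap.ker (evalSum2 (V := V) x y)) = Fintype.card V - 3 := by
  have hsurj : Function.Surjective (evalSum2 (V := V) x y) := by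
    rintro ⟨a, b, c⟩
    refine ⟨Pi.single x a + Pi.single y b + Pi.single z (c - a - b), ?_⟩
    simp [evalSum2, sumLM, Pi.single_eq_of_ne (Ne.symm hzx), Pi.single_eq_of_ne (Ne.symm hzy),
      Pi.single_eq_of_ne hxy, Pi.single_eq_of_ne (Ne.symm hxy), Finset.sum_add_distrib,
      Finset.sum_pi_single', LinearMap.prod_apply]
  have h := LinearMap.finrank_range_add_finrank_ker (evalSum2 (V := V) x y)
  rw [LinearMap.range_eq_top.mpr hsurj, finrank_top,
    Module.finrank_fintype_fun_eq_card] at h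
  have h3 : Module.finrank ℝ (ℝ × ℝ × ℝ) = 3 := by simp [Module.finrank_prod]
  omega

/-- For an independent `C` and `x ∈ C`, the inequality `p x ≥ 0` defines a facet of
the mode polytope (i.e. the corresponding face has dimension `|V| - 2`) if and only
if `x` is an isolated vertex of `G`. -/
theorem positivity_facet_iff_isolated {V : Type*} [Fintype V]
    (G : SimpleGraph V) (C : Set V)
    (hInd : ∀ x ∈ C, ∀ y ∈ C, ¬ G.Adj x y) (x : V) (hx : x ∈ C) :
    affDim {p | p ∈ modePolytope G C ∧ p x = 0} = (Fintype.card V : ℤ) - 2 ↔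
      ∀ y, ¬ G.Adj x y := by
  classical
  set F : Set (V → ℝ) := {p | p ∈ modePolytope G C ∧ p x = 0} with hFdef
  have hmemF : ∀ p, p ∈ F ↔ ((∀ v, 0 ≤ p v) ∧ (∑ v, p v = 1) ∧
      ∀ c ∈ C, ∀ y, G.Adj c y → p y ≤ p c) ∧ p x = 0 := by
    intro p; rfl
  constructor
  · -- facet → isolated
    intro hdim y hadj
    have hxy : x ≠ y := G.ne_of_adj hadj
    by_cases hFe : F = ∅
    · rw [affDim, if_pos hFe] at hdim
      have h2 : 2 ≤ Fintype.card V :=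
        Fintype.one_lt_card_iff_nontrivial.mpr ⟨⟨x, y, hxy⟩⟩
      omega
    · obtain ⟨p, hp⟩ := Set.nonempty_iff_ne_empty.mpr hFe
      obtain ⟨⟨hpos, hsum, hmode⟩, hpx⟩ := (hmemF p).mp hp
      have hpy0 : ∀ q ∈ F, q y = 0 := by
        intro q hq
        obtain ⟨⟨hqpos, _, hqmode⟩, hqx⟩ := (hmemF q).mp hq
        have := hqmode x hx y hadj
        rw [hqx] at this
        exact le_antisymm this (hqpos y)
      have hz : ∃ z, p z ≠ 0 := by
        by_contra h
        push_neg at h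
        rw [Finset.sum_eq_zero (fun v _ => h v)] at hsum
        exact one_ne_zero hsum.symm
      obtain ⟨z, hzne⟩ := hz
      have hzx : z ≠ x := fun h => hzne (by rw [h, hpx])
      have hzy : z ≠ y := fun h => hzne (by rw [h, hpy0 p hp])
      have h3 : 3 ≤ Fintype.card V := by
        have hle := Finset.card_le_univ ({x, y, z} : Finset V)
        have hc : ({x, y, z} : Finset V).card = 3 := by
          rw [Finset.card_insert_of_notMem (by simp [hxy, Ne.symm hzx]),
            Finset.card_insert_of_notMem (by simp [Ne.symm hzy]), Finset.card_singleton]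
        omega
      -- the direction of the affine span is contained in ker (evalSum2 x y)
      have hsub : vectorSpan ℝ F ≤ LinearMap.ker (evalSum2 (V := V) x y) := by
        rw [vectorSpan_def, Submodule.span_le]
        rintro v ⟨a, ha, b, hb, rfl⟩
        obtain ⟨⟨_, hasum, _⟩, hax⟩ := (hmemF a).mp ha
        obtain ⟨⟨_, hbsum, _⟩, hbx⟩ := (hmemF b).mp hb
        simp only [SetLike.mem_coe, LinearMap.mem_ker, evalSum2, sumLM,
          LinearMap.prod_apply, LinearMap.coe_mk, AddHom.coe_mk, Function.prod,
          LinearMap.proj_apply, Prod.mk_eq_zero]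
        have hvs : a -ᵥ b = a - b := rfl
        rw [hvs]
        refine ⟨?_, ?_, ?_⟩
        · simp [hax, hbx]
        · simp [hpy0 a ha, hpy0 b hb]
        · simp [Finset.sum_sub_distrib, hasum, hbsum]
      have hFne : F ≠ ∅ := hFe
      rw [affDim, if_neg hFne, direction_affineSpan] at hdim
      have hfr : Module.finrank ℝ (vectorSpan ℝ F) ≤ Fintype.card V - 3 := by
        rw [← finrank_ker_evalSum2 x y z hxy hzx hzy]
        exact Submodule.finrank_mono hsub
      omega
  · -- isolated → facet
    intro hiso
    by_cases hV : ∃ z, z ≠ x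
    · obtain ⟨z, hz⟩ := hV
      set w : V → ℝ := fun v => if v = x then 0 else if v ∈ C then 2 else 1 with hw
      have hw0 : ∀ v, 0 ≤ w v := by
        intro v; rw [hw]; dsimp only; split_ifs <;> norm_num
      have hwz : 1 ≤ w z := by
        rw [hw]; dsimp only; rw [if_neg hz]; split_ifs <;> norm_num
      have hS : 0 < ∑ v, w v :=
        Finset.sum_pos' (fun v _ => hw0 v) ⟨z, Finset.mem_univ z, by linarith⟩
      set S : ℝ := ∑ v, w v with hSdef
      set q : V → ℝ := fun v => S⁻¹ * w v with hq
      have hqx : q x = 0 := by simp [hq, hw]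
      have hSinv : 0 < S⁻¹ := inv_pos.mpr hS
      have hqsum : ∑ v, q v = 1 := by
        rw [hq, ← Finset.mul_sum, ← hSdef, inv_mul_cancel₀ hS.ne']
      have hwC : ∀ c ∈ C, c ≠ x → w c = 2 := by
        intro c hc hcx; rw [hw]; dsimp only; rw [if_neg hcx, if_pos hc]
      have hwle1 : ∀ v, v ∉ C → w v ≤ 1 := by
        intro v hv; rw [hw]; dsimp only
        split_ifs <;> norm_num
      have hqF : q ∈ F := by
        rw [hmemF]
        refine ⟨⟨fun v => mul_nonneg hSinv.le (hw0 v), hqsum, ?_⟩, hqx⟩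
        intro c hc y hadj
        have hcx : c ≠ x := by rintro rfl; exact hiso y hadj
        have hyC : y ∉ C := fun h => hInd c hc y h hadj
        have h1 : w y ≤ 1 := hwle1 y hyC
        have h2 : w c = 2 := hwC c hc hcx
        rw [hq]; dsimp only
        rw [h2]
        nlinarith
      have hFne : F ≠ ∅ := Set.nonempty_iff_ne_empty.mp ⟨q, hqF⟩
      -- vectorSpan F = ker (evalSum x)
      have hupper : vectorSpan ℝ F ≤ LinearMap.ker (evalSum (V := V) x) := by
        rw [vectorSpan_def, Submodule.span_le]
        rintro v ⟨a, ha, b, hb, rfl⟩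
        obtain ⟨⟨_, hasum, _⟩, hax⟩ := (hmemF a).mp ha
        obtain ⟨⟨_, hbsum, _⟩, hbx⟩ := (hmemF b).mp hb
        simp only [SetLike.mem_coe, LinearMap.mem_ker, evalSum, sumLM,
          LinearMap.prod_apply, LinearMap.coe_mk, AddHom.coe_mk, Function.prod,
          LinearMap.proj_apply, Prod.mk_eq_zero]
        have hvs : a -ᵥ b = a - b := rfl
        rw [hvs]
        constructor
        · simp [hax, hbx]
        · simp [Finset.sum_sub_distrib, hasum, hbsum]
      have hlower : LinearMap.ker (evalSum (V := V) x) ≤ vectorSpan ℝ F := by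
        intro d hd
        rw [LinearMap.mem_ker] at hd
        have hdx : d x = 0 := congrArg Prod.fst hd
        have hds : ∑ v, d v = 0 := congrArg Prod.snd hd
        set S1 : ℝ := ∑ v, |d v| with hS1
        have hS1nn : 0 ≤ S1 := Finset.sum_nonneg fun v _ => abs_nonneg _
        have hdb : ∀ v, |d v| ≤ S1 := fun v =>
          Finset.single_le_sum (fun i _ => abs_nonneg (d i)) (Finset.mem_univ v)
        set ε : ℝ := S⁻¹ / (2 * S1 + 1) with hε
        have hεpos : 0 < ε := div_pos hSinv (by linarith)
        have key : ε * (2 * S1 + 1) = S⁻¹ := div_mul_cancel₀ _ (by linarith)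
        have key' : ε * (2 * S1) + ε = S⁻¹ := by rw [← key]; ring
        have hmem : q + ε • d ∈ F := by
          rw [hmemF]
          refine ⟨⟨?_, ?_, ?_⟩, ?_⟩
          · intro v
            by_cases hvx : v = x
            · subst hvx
              simp [hqx, hdx]
            · have hwv : 1 ≤ w v := by
                rw [hw]; dsimp only; rw [if_neg hvx]; split_ifs <;> norm_num
              have hqv : S⁻¹ ≤ q v := by
                rw [hq]; dsimp only; nlinarith
              have habs1 : ε * |d v| ≤ ε * S1 :=
                mul_le_mul_of_nonneg_left (hdb v) hεpos.le
              have habs2 : ε * (-(d v)) ≤ ε * |d v| :=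
                mul_le_mul_of_nonneg_left (neg_le_abs _) hεpos.le
              have : (q + ε • d) v = q v + ε * d v := rfl
              rw [this]
              nlinarith
          · have : ∑ v, (q + ε • d) v = ∑ v, q v + ε * ∑ v, d v := by
              rw [Finset.mul_sum, ← Finset.sum_add_distrib]; rfl
            rw [this, hqsum, hds]; ring
          · intro c hc y hadj
            have hcx : c ≠ x := by rintro rfl; exact hiso y hadj
            have hyC : y ∉ C := fun h => hInd c hc y h hadj
            have h1 : w y ≤ 1 := hwle1 y hyC
            have h2 : w c = 2 := hwC c hc hcx
            have hqyle : q y ≤ S⁻¹ := by rw [hq]; dsimp only; nlinarith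
            have hqc : q c = 2 * S⁻¹ := by rw [hq]; dsimp only; rw [h2]; ring
            have habs1 : ε * |d y| ≤ ε * S1 :=
              mul_le_mul_of_nonneg_left (hdb y) hεpos.le
            have habs2 : ε * d y ≤ ε * |d y| :=
              mul_le_mul_of_nonneg_left (le_abs_self _) hεpos.le
            have habs3 : ε * |d c| ≤ ε * S1 :=
              mul_le_mul_of_nonneg_left (hdb c) hεpos.le
            have habs4 : ε * (-(d c)) ≤ ε * |d c| :=
              mul_le_mul_of_nonneg_left (neg_le_abs _) hεpos.le
            have he1 : (q + ε • d) y = q y + ε * d y := rfl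
            have he2 : (q + ε • d) c = q c + ε * d c := rfl
            rw [he1, he2]
            nlinarith
          · have : (q + ε • d) x = q x + ε * d x := rfl
            rw [this, hqx, hdx]; ring
        have hεd : ε • d ∈ vectorSpan ℝ F := by
          have h := vsub_mem_vectorSpan ℝ hmem hqF
          have : (q + ε • d) -ᵥ q = ε • d := by
            simp [vsub_eq_sub]
          rwa [this] at h
        have h2 := Submodule.smul_mem (vectorSpan ℝ F) ε⁻¹ hεd
        rwa [smul_smul, inv_mul_cancel₀ hεpos.ne', one_smul] at h2
      have heq : vectorSpan ℝ F = LinearMap.ker (evalSum (V := V) x) :=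
        le_antisymm hupper hlower
      rw [affDim, if_neg hFne, direction_affineSpan, heq, finrank_ker_evalSum x z hz]
      have h2 : 2 ≤ Fintype.card V :=
        Fintype.one_lt_card_iff_nontrivial.mpr ⟨⟨z, x, hz⟩⟩
      omega
    · push_neg at hV
      have hFe : F = ∅ := by
        ext p
        simp only [Set.mem_empty_iff_false, iff_false]
        intro hp
        obtain ⟨⟨_, hsum, _⟩, hpx⟩ := (hmemF p).mp hp
        have : ∑ v, p v = 0 := Finset.sum_eq_zero fun v _ => by rw [hV v]; exact hpx
        rw [this] at hsum
        exact zero_ne_one hsum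
      have hc1 : Fintype.card V = 1 := Fintype.card_eq_one_iff.mpr ⟨x, hV⟩
      rw [affDim, if_pos hFe, hc1]
      norm_num
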